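/- arXiv:2307.15869 — 9 statements merged into one kernel-verified Lean document; each statement's English description precedes it below -/
import Mathlib

section
/- Let X be a real locally convex topological vector space and let Ω ⊂ X be any (not necessarily convex) subset. Then ri(Ω) = rint(Ω) if the affine hull aff(Ω) is closed, and ri(Ω) = ∅ otherwise. In particular, ri(Ω) ⊂ rint(Ω), with equality whenever ri(Ω) ≠ ∅. -/
open Pointwise Set

/-- Interior of a set relative to its affine hull. -/
def rint {X : Type*} [AddCommGroup X] [Module ℝ X] [TopologicalSpace X] (A : Set X) : Set X :=
  {x ∈ A | ∃ V ∈ nhds (0 : X), ∀ v ∈ V, x + v ∈ (affineSpan ℝ A : Set X) → x + v ∈ A}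

/-- Interior of a set relative to the closure of its affine hull. -/
def ri {X : Type*} [AddCommGroup X] [Module ℝ X] [TopologicalSpace X] (A : Set X) : Set X :=
  {x ∈ A | ∃ V ∈ nhds (0 : X), ∀ v ∈ V, x + v ∈ closure (affineSpan ℝ A : Set X) → x + v ∈ A}

lemma ri_mem_isClosed {X : Type*} [AddCommGroup X] [Module ℝ X] [TopologicalSpace X]
    [IsTopologicalAddGroup X] [ContinuousSMul ℝ X] (Ω : Set X) (x : X) (hx : x ∈ ri Ω) :
    IsClosed (affineSpan ℝ Ω : Set X) := by
  obtain ⟨hxA, V, hV, hVmem⟩ := hx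
  have hxs : x ∈ (affineSpan ℝ Ω : Set X) := subset_affineSpan ℝ Ω hxA
  apply isClosed_of_closure_subset
  intro y hy
  have hcont : Filter.Tendsto (fun t : ℝ => t • (y - x)) (nhds 0) (nhds 0) := by
    have h : Continuous fun t : ℝ => t • (y - x) := continuous_id.smul continuous_const
    simpa using h.tendsto 0
  have hpre : {t : ℝ | t • (y - x) ∈ V} ∈ nhds (0 : ℝ) := hcont hV
  obtain ⟨ε, hε, hball⟩ := Metric.mem_nhds_iff.1 hpre
  set t : ℝ := ε / 2 with ht
  have ht0 : t ≠ 0 := by positivity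
  have htV : t • (y - x) ∈ V := by
    apply hball
    simp [Real.dist_eq, abs_of_pos, ht]
    rw [abs_of_pos (by positivity)]
    linarith
  have hmaps : Set.MapsTo (fun z => t • (z - x) + x) (affineSpan ℝ Ω : Set X)
      (affineSpan ℝ Ω : Set X) := by
    intro z hz
    have := AffineSubspace.smul_vsub_vadd_mem (affineSpan ℝ Ω) t hz hxs hxs
    simpa [vsub_eq_sub, vadd_eq_add, add_comm] using this
  have hcl : x + t • (y - x) ∈ closure (affineSpan ℝ Ω : Set X) := by
    have hf : Continuous fun z : X => t • (z - x) + x :=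
      ((continuous_id.sub continuous_const).const_smul t).add continuous_const
    have := map_mem_closure hf hy hmaps
    simpa [add_comm] using this
  have hmem : x + t • (y - x) ∈ Ω := hVmem _ htV hcl
  have hp : x + t • (y - x) ∈ (affineSpan ℝ Ω : Set X) := subset_affineSpan ℝ Ω hmem
  have hyeq : y = (1 / t) • ((x + t • (y - x)) - x) + x := by
    rw [add_sub_cancel_left, smul_smul, one_div_mul_cancel ht0, one_smul]
    abel
  rw [hyeq]
  have := AffineSubspace.smul_vsub_vadd_mem (affineSpan ℝ Ω) (1 / t) hp hxs hxs
  simpa [vsub_eq_sub, vadd_eq_add, add_comm] using this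

theorem stmt0 {X : Type*} [AddCommGroup X] [Module ℝ X] [TopologicalSpace X]
    [IsTopologicalAddGroup X] [ContinuousSMul ℝ X] [LocallyConvexSpace ℝ X] (Ω : Set X) :
    (IsClosed (affineSpan ℝ Ω : Set X) → ri Ω = rint Ω) ∧
    (¬ IsClosed (affineSpan ℝ Ω : Set X) → ri Ω = (∅ : Set X)) ∧
    ri Ω ⊆ rint Ω ∧ (ri Ω ≠ ∅ → ri Ω = rint Ω) := by
  have heq : IsClosed (affineSpan ℝ Ω : Set X) → ri Ω = rint Ω := by
    intro h
    unfold ri rint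
    rw [h.closure_eq]
  have hempty : ¬ IsClosed (affineSpan ℝ Ω : Set X) → ri Ω = (∅ : Set X) := by
    intro h
    rw [Set.eq_empty_iff_forall_notMem]
    intro x hx
    exact h (ri_mem_isClosed Ω x hx)
  refine ⟨heq, hempty, ?_, ?_⟩
  · rintro x ⟨hA, V, hV, hVm⟩
    exact ⟨hA, V, hV, fun v hv hsp => hVm v hv (subset_closure hsp)⟩
  · intro hne
    obtain ⟨x, hx⟩ := Set.nonempty_iff_ne_empty.2 hne
    exact heq (ri_mem_isClosed Ω x hx)
end

section
/- Let X be a real locally convex topological vector space and let Ω ⊂ X be any (not necessarily convex) subset. Then ri(Ω) ⊂ sqri(Ω) ⊂ iri(Ω) ⊂ qri(Ω) and ri(Ω) ⊂ rint(Ω) ⊂ iri(Ω). Moreover, if Ω is convex and ri(Ω) ≠ ∅, then all of these inclusions are equalities. -/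
open Pointwise Set

/-- Conic hull: `cone(A) = {λa : λ ≥ 0, a ∈ A}`. -/
def coneHull {Z : Type*} [AddCommGroup Z] [Module ℝ Z] (A : Set Z) : Set Z :=
  {y | ∃ c : ℝ, 0 ≤ c ∧ ∃ a ∈ A, y = c • a}

/-- A set is a linear subspace if it underlies some `ℝ`-submodule. -/
def IsLinearSubspace {Z : Type*} [AddCommGroup Z] [Module ℝ Z] (S : Set Z) : Prop :=
  ∃ L : Submodule ℝ Z, (L : Set Z) = S

/-- Intrinsic relative interior. -/
def iri {Z : Type*} [AddCommGroup Z] [Module ℝ Z] (A : Set Z) : Set Z :=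
  {x ∈ A | IsLinearSubspace (coneHull (A - {x}))}

/-- Strong quasi-relative interior. -/
def sqri {Z : Type*} [AddCommGroup Z] [Module ℝ Z] [TopologicalSpace Z] (A : Set Z) : Set Z :=
  {x ∈ A | IsLinearSubspace (coneHull (A - {x})) ∧ IsClosed (coneHull (A - {x}))}

/-- Quasi-relative interior. -/
def qri {Z : Type*} [AddCommGroup Z] [Module ℝ Z] [TopologicalSpace Z] (A : Set Z) : Set Z :=
  {x ∈ A | IsLinearSubspace (closure (coneHull (A - {x})))}

set_option linter.unusedSectionVars false
set_option linter.unusedVariables false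

section Aux
variable {X : Type*} [AddCommGroup X] [Module ℝ X] [TopologicalSpace X]
  [IsTopologicalAddGroup X] [ContinuousSMul ℝ X]

lemma memSub {A : Set X} {x y : X} : y ∈ A - ({x}:Set X) ↔ ∃ a ∈ A, a - x = y := by
  simp [Set.sub_singleton]

lemma coneHull_subset {A : Set X} {L : Submodule ℝ X} (h : A ⊆ (L : Set X)) :
    coneHull A ⊆ (L : Set X) := by
  rintro y ⟨c, hc, a, ha, rfl⟩
  exact L.smul_mem c (h ha)

lemma mem_coneHull_of_mem {A : Set X} {a : X} (ha : a ∈ A) : a ∈ coneHull A :=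
  ⟨1, zero_le_one, a, ha, (one_smul _ _).symm⟩

lemma mem_coneHull_of_pos_smul {A : Set X} {t : ℝ} (ht : 0 < t) {y : X}
    (h : t • y ∈ A) : y ∈ coneHull A :=
  ⟨t⁻¹, (inv_pos.2 ht).le, t • y, h, by rw [smul_smul, inv_mul_cancel₀ ht.ne', one_smul]⟩

lemma exists_pos_smul_mem {V : Set X} (hV : V ∈ nhds (0:X)) (y : X) :
    ∃ t : ℝ, 0 < t ∧ t • y ∈ V := by
  have hc : Continuous fun t : ℝ => t • y := continuous_id.smul continuous_const
  have h0 : (fun t : ℝ => t • y) 0 = 0 := zero_smul _ _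
  have hpre : (fun t : ℝ => t • y) ⁻¹' V ∈ nhds (0:ℝ) :=
    hc.continuousAt.preimage_mem_nhds (by simpa using hV)
  obtain ⟨ε, hε, hball⟩ := Metric.mem_nhds_iff.1 hpre
  refine ⟨ε/2, by linarith, hball ?_⟩
  simp [Real.ball_eq_Ioo]
  constructor <;> linarith

lemma spanSub_le_vectorSpan {A : Set X} {x : X} (hx : x ∈ A) :
    Submodule.span ℝ (A - ({x}:Set X)) ≤ vectorSpan ℝ A := by
  rw [Submodule.span_le]
  rintro y hy
  obtain ⟨a, ha, rfl⟩ := memSub.1 hy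
  have : a -ᵥ x ∈ vectorSpan ℝ A := vsub_mem_vectorSpan ℝ ha hx
  simpa using this

lemma add_mem_affineSpan {A : Set X} {x : X} (hx : x ∈ A) {v : X}
    (hv : v ∈ Submodule.span ℝ (A - ({x}:Set X))) :
    x + v ∈ (affineSpan ℝ A : Set X) := by
  have h1 : v ∈ (affineSpan ℝ A).direction := by
    rw [direction_affineSpan]; exact spanSub_le_vectorSpan hx hv
  have := AffineSubspace.vadd_mem_of_mem_direction h1 (mem_affineSpan ℝ hx)
  simpa [add_comm] using this

/-- core for rint ⊆ iri -/
lemma coneHull_eq_span_of_rint {A : Set X} {x : X} (hxA : x ∈ A)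
    (hx : ∃ V ∈ nhds (0:X), ∀ v ∈ V, x + v ∈ (affineSpan ℝ A : Set X) → x + v ∈ A) :
    coneHull (A - ({x}:Set X)) = (Submodule.span ℝ (A - ({x}:Set X)) : Set X) := by
  apply Subset.antisymm (coneHull_subset Submodule.subset_span)
  intro y hy
  obtain ⟨V, hV, hVA⟩ := hx
  obtain ⟨t, ht, htV⟩ := exists_pos_smul_mem hV y
  have hmem : x + t • y ∈ A := hVA _ htV (add_mem_affineSpan hxA
    (Submodule.smul_mem _ t hy))
  exact mem_coneHull_of_pos_smul ht (memSub.2 ⟨x + t • y, hmem, by abel⟩)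

/-- core for ri ⊆ sqri -/
lemma coneHull_eq_closure_span_of_ri {A : Set X} {x : X} (hxA : x ∈ A)
    (hx : ∃ V ∈ nhds (0:X), ∀ v ∈ V, x + v ∈ closure (affineSpan ℝ A : Set X) → x + v ∈ A) :
    coneHull (A - ({x}:Set X)) =
      ((Submodule.span ℝ (A - ({x}:Set X))).topologicalClosure : Set X) := by
  apply Subset.antisymm
  · exact coneHull_subset (fun y hy =>
      Submodule.le_topologicalClosure _ (Submodule.subset_span hy))
  intro y hy
  obtain ⟨V, hV, hVA⟩ := hx
  obtain ⟨t, ht, htV⟩ := exists_pos_smul_mem hV y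
  have hycl : y ∈ closure (Submodule.span ℝ (A - ({x}:Set X)) : Set X) := hy
  have hty : t • y ∈ closure (Submodule.span ℝ (A - ({x}:Set X)) : Set X) :=
    (Submodule.span ℝ (A - ({x}:Set X))).topologicalClosure.smul_mem t hy
  have hmcl : x + t • y ∈ closure (affineSpan ℝ A : Set X) :=
    map_mem_closure (continuous_add_left x) hty (fun z hz => add_mem_affineSpan hxA hz)
  have hmem : x + t • y ∈ A := hVA _ htV hmcl
  exact mem_coneHull_of_pos_smul ht (memSub.2 ⟨x + t • y, hmem, by abel⟩)

lemma coneHull_convex {A : Set X} (hA : Convex ℝ A) : Convex ℝ (coneHull A) := by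
  rintro _ ⟨c, hc, a, ha, rfl⟩ _ ⟨d, hd, b, hb, rfl⟩ s t hs ht hst
  by_cases h : s * c + t * d = 0
  · have h1 : s * c = 0 := by nlinarith [mul_nonneg hs hc, mul_nonneg ht hd]
    have h2 : t * d = 0 := by nlinarith [mul_nonneg hs hc, mul_nonneg ht hd]
    refine ⟨0, le_refl 0, a, ha, ?_⟩
    rw [smul_smul, smul_smul, h1, h2]
    simp
  · have hpos : 0 < s * c + t * d :=
      lt_of_le_of_ne (by positivity) (Ne.symm h)
    refine ⟨s * c + t * d, hpos.le,
      (s * c / (s * c + t * d)) • a + (t * d / (s * c + t * d)) • b,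
      hA ha hb (by positivity) (by positivity) (by field_simp), ?_⟩
    rw [smul_add, smul_smul, smul_smul, smul_smul, smul_smul]
    rw [mul_div_cancel₀ _ h, mul_div_cancel₀ _ h]

lemma segment_mem_ri {A : Set X} (hconv : Convex ℝ A) {x0 ω x : X} (hω : ω ∈ A)
    (hxA : x ∈ A) (hx0A : x0 ∈ A)
    {V0 : Set X} (hV0 : V0 ∈ nhds (0:X))
    (h0 : ∀ v ∈ V0, x0 + v ∈ closure (affineSpan ℝ A : Set X) → x0 + v ∈ A)
    {s : ℝ} (hs0 : 0 < s) (hs1 : s < 1)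
    (hxeq : x = (1-s) • x0 + s • ω) :
    ∃ V ∈ nhds (0:X), ∀ v ∈ V, x + v ∈ closure (affineSpan ℝ A : Set X) → x + v ∈ A := by
  have h1s : (1 - s) ≠ 0 := by linarith
  refine ⟨(fun v : X => (1-s)⁻¹ • v) ⁻¹' V0, ?_, ?_⟩
  · exact (continuous_const_smul ((1-s)⁻¹ : ℝ)).continuousAt.preimage_mem_nhds
      (by simpa using hV0)
  · intro v hv hcl
    set w := (1-s)⁻¹ • v with hw
    have hωs : ω ∈ (affineSpan ℝ A : Set X) := mem_affineSpan ℝ hω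
    -- x0 + w = (1-s)⁻¹ • ((x+v) - ω) + ω
    have hkey : x0 + w = (1-s)⁻¹ • ((x + v) - ω) + ω := by
      rw [hxeq, hw]
      match_scalars <;> field_simp <;> ring
    have hmt : ∀ z ∈ (affineSpan ℝ A : Set X),
        (1-s)⁻¹ • (z - ω) + ω ∈ (affineSpan ℝ A : Set X) := by
      intro z hz
      have := (affineSpan ℝ A).smul_vsub_vadd_mem' ((1-s)⁻¹) hz hωs hωs
      simpa [vsub_eq_sub, vadd_eq_add, add_comm] using this
    have hcl2 : x0 + w ∈ closure (affineSpan ℝ A : Set X) := by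
      rw [hkey]
      exact map_mem_closure (f := fun z : X => (1-s)⁻¹ • (z - ω) + ω)
        (((continuous_id.sub continuous_const).const_smul _).add continuous_const) hcl hmt
    have hmem : x0 + w ∈ A := h0 w hv hcl2
    have : x + v = (1-s) • (x0 + w) + s • ω := by
      rw [hxeq, hw]
      match_scalars <;> field_simp
    rw [this]
    exact hconv hmem hω (by linarith) hs0.le (by ring)

lemma qri_to_ri {A : Set X} (hconv : Convex ℝ A) {x0 : X} (hx0A : x0 ∈ A)
    {V0 : Set X} (hV0 : V0 ∈ nhds (0:X))
    (h0 : ∀ v ∈ V0, x0 + v ∈ closure (affineSpan ℝ A : Set X) → x0 + v ∈ A)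
    {x : X} (hxA : x ∈ A) {L : Submodule ℝ X}
    (hL : (L : Set X) = closure (coneHull (A - ({x}:Set X)))) :
    ∃ V ∈ nhds (0:X), ∀ v ∈ V, x + v ∈ closure (affineSpan ℝ A : Set X) → x + v ∈ A := by
  set K := coneHull (A - ({x}:Set X)) with hK
  have hKconv : Convex ℝ K := coneHull_convex (hconv.sub (convex_singleton x))
  set V1 := balancedCore ℝ V0 with hV1def
  have hV1 : V1 ∈ nhds (0:X) := balancedCore_mem_nhds_zero hV0
  have hbal : Balanced ℝ V1 := balancedCore_balanced V0
  have hsub : V1 ⊆ V0 := balancedCore_subset V0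
  set p := x0 - x with hp
  have hpsub : p ∈ A - ({x}:Set X) := memSub.2 ⟨x0, hx0A, rfl⟩
  have hpK : p ∈ K := mem_coneHull_of_mem hpsub
  have hpL : p ∈ (L : Set X) := by rw [hL]; exact subset_closure hpK
  have h3p : (-3:ℝ) • p ∈ closure K := by
    rw [← hL]; exact L.smul_mem _ hpL
  -- find k ∈ K near -3p
  have hU : (fun z : X => z + (3:ℝ) • p) ⁻¹' V1 ∈ nhds ((-3:ℝ) • p) := by
    refine (continuous_id.add continuous_const).continuousAt.preimage_mem_nhds ?_
    convert hV1 using 2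
    simp only [Pi.add_apply, id_eq]; module
  obtain ⟨k, hkV, hkK⟩ := mem_closure_iff_nhds.1 h3p _ hU
  set v := k + (3:ℝ) • p with hv
  have hvV1 : v ∈ V1 := hkV
  have hkS : k ∈ Submodule.span ℝ (A - ({x}:Set X)) :=
    coneHull_subset Submodule.subset_span hkK
  have hpS : p ∈ Submodule.span ℝ (A - ({x}:Set X)) := Submodule.subset_span hpsub
  have hvS : v ∈ Submodule.span ℝ (A - ({x}:Set X)) :=
    Submodule.add_mem _ hkS (Submodule.smul_mem _ _ hpS)
  have hnegvV1 : -v ∈ V1 := hbal.neg_mem_iff.2 hvV1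
  have hx0v : x0 + (-v) ∈ A := by
    refine h0 (-v) (hsub hnegvV1) (subset_closure ?_)
    have hdir : -v ∈ (affineSpan ℝ A).direction := by
      rw [direction_affineSpan]
      exact spanSub_le_vectorSpan hxA (Submodule.neg_mem _ hvS)
    have := AffineSubspace.vadd_mem_of_mem_direction hdir (mem_affineSpan ℝ hx0A)
    simpa [add_comm] using this
  have hpvK : p - v ∈ K := by
    refine mem_coneHull_of_mem (memSub.2 ⟨x0 + (-v), hx0v, ?_⟩)
    rw [hp]; abel
  have hnegp : -p ∈ K := by
    have heq : -p = (1/2:ℝ) • (p - v) + (1/2:ℝ) • k := by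
      rw [hv]; module
    rw [heq]
    exact hKconv hpvK hkK (by norm_num) (by norm_num) (by norm_num)
  obtain ⟨c, hc, a, ha, hEq⟩ := hnegp
  obtain ⟨ω, hω, rfl⟩ := memSub.1 ha
  rcases eq_or_lt_of_le hc with hc0 | hcpos
  · -- c = 0 : x = x0
    have hxx0 : x = x0 := by
      have : -p = 0 := by rw [hEq, ← hc0]; simp
      rw [hp] at this
      have := neg_eq_zero.1 this
      exact (sub_eq_zero.1 this).symm
    exact ⟨V0, hV0, by rw [hxx0]; exact h0⟩
  · -- c > 0
    have hc1 : (0:ℝ) < 1 + c := by linarith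
    have hEq2 : x - x0 = c • ω - c • x := by
      rw [← neg_sub x0 x, hEq, smul_sub]
    have h3 : c • ω = x - x0 + c • x := sub_eq_iff_eq_add.1 hEq2.symm
    have hω' : ω = c⁻¹ • (x - x0 + c • x) := by
      rw [← h3, smul_smul, inv_mul_cancel₀ hcpos.ne', one_smul]
    set s : ℝ := c / (1 + c) with hs
    have hs0 : 0 < s := by positivity
    have hs1 : s < 1 := (div_lt_one hc1).2 (by linarith)
    have hxeq : x = (1 - s) • x0 + s • ω := by
      rw [hω', hs]
      match_scalars <;> field_simp <;> ring
    exact segment_mem_ri hconv hω hxA hx0A hV0 h0 hs0 hs1 hxeq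

end Aux

theorem stmt1 {X : Type*} [AddCommGroup X] [Module ℝ X] [TopologicalSpace X]
    [IsTopologicalAddGroup X] [ContinuousSMul ℝ X] [LocallyConvexSpace ℝ X] (Ω : Set X) :
    ri Ω ⊆ sqri Ω ∧ sqri Ω ⊆ iri Ω ∧ iri Ω ⊆ qri Ω ∧
    ri Ω ⊆ rint Ω ∧ rint Ω ⊆ iri Ω ∧
    (Convex ℝ Ω → (ri Ω).Nonempty →
      (ri Ω = sqri Ω ∧ sqri Ω = iri Ω ∧ iri Ω = qri Ω ∧ ri Ω = rint Ω ∧ rint Ω = iri Ω)) := by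

  have h1 : ri Ω ⊆ sqri Ω := by
    rintro x ⟨hxA, hV⟩
    have heq := coneHull_eq_closure_span_of_ri hxA hV
    refine ⟨hxA, ⟨_, heq.symm⟩, ?_⟩
    rw [heq, Submodule.topologicalClosure_coe]
    exact isClosed_closure
  have h2 : sqri Ω ⊆ iri Ω := fun x hx => ⟨hx.1, hx.2.1⟩
  have h3 : iri Ω ⊆ qri Ω := by
    rintro x ⟨hxA, L, hL⟩
    exact ⟨hxA, L.topologicalClosure, by rw [Submodule.topologicalClosure_coe, hL]⟩
  have h4 : ri Ω ⊆ rint Ω := by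
    rintro x ⟨hxA, V, hV, h⟩
    exact ⟨hxA, V, hV, fun v hv hm => h v hv (subset_closure hm)⟩
  have h5 : rint Ω ⊆ iri Ω := by
    rintro x ⟨hxA, hV⟩
    exact ⟨hxA, _, (coneHull_eq_span_of_rint hxA hV).symm⟩
  refine ⟨h1, h2, h3, h4, h5, fun hconv hne => ?_⟩
  obtain ⟨x0, hx0A, V0, hV0, h0⟩ := hne
  have hqr : qri Ω ⊆ ri Ω := by
    rintro x ⟨hxA, L, hL⟩
    exact ⟨hxA, qri_to_ri hconv hx0A hV0 h0 hxA hL⟩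
  have e1 : ri Ω = sqri Ω :=
    Subset.antisymm h1 (fun x hx => hqr (h3 (h2 hx)))
  have e2 : sqri Ω = iri Ω :=
    Subset.antisymm h2 (fun x hx => h1 (hqr (h3 hx)))
  have e3 : iri Ω = qri Ω :=
    Subset.antisymm h3 (fun x hx => h2 (h1 (hqr hx)))
  have e4 : ri Ω = rint Ω :=
    Subset.antisymm h4 (fun x hx => hqr (h3 (h5 hx)))
  have e5 : rint Ω = iri Ω :=
    Subset.antisymm h5 (fun x hx => h4 (hqr (h3 hx)))
  exact ⟨e1, e2, e3, e4, e5⟩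
end

section
/- Let X be a real vector space and let Ω ⊂ X be a nonempty convex set. Then for every w ∈ Ω one has span(Ω−w) = cone(Ω−Ω), where Ω−Ω := {u − v : u, v ∈ Ω}. -/
open Pointwise Set

theorem stmt3 {X : Type*} [AddCommGroup X] [Module ℝ X] (Ω : Set X) (hne : Ω.Nonempty)
    (hconv : Convex ℝ Ω) (w : X) (hw : w ∈ Ω) :
    (Submodule.span ℝ (Ω - {w}) : Set X) = coneHull (Ω - Ω) := by
  have hmem : ∀ u ∈ Ω, ∀ v ∈ Ω, u - v ∈ Ω - Ω := fun u hu v hv => ⟨u, hu, v, hv, rfl⟩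
  let S : Submodule ℝ X :=
    { carrier := coneHull (Ω - Ω)
      zero_mem' := ⟨0, le_refl 0, w - w, hmem w hw w hw, by simp⟩
      add_mem' := by
        rintro x y ⟨c, hc, a, ⟨u, hu, v, hv, rfl⟩, rfl⟩ ⟨d, hd, b, ⟨u', hu', v', hv', rfl⟩, rfl⟩
        show c • (u - v) + d • (u' - v') ∈ coneHull (Ω - Ω)
        rcases eq_or_lt_of_le (add_nonneg hc hd) with h0 | hpos
        · have hc0 : c = 0 := by linarith
          have hd0 : d = 0 := by linarith
          exact ⟨0, le_refl 0, w - w, hmem w hw w hw, by simp [hc0, hd0]⟩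
        · have hne0 : c + d ≠ 0 := ne_of_gt hpos
          set t := c / (c + d) with ht
          set s := d / (c + d) with hs
          have hts : t + s = 1 := by
            rw [ht, hs, ← add_div, div_self hne0]
          have htn : 0 ≤ t := div_nonneg hc (le_of_lt hpos)
          have hsn : 0 ≤ s := div_nonneg hd (le_of_lt hpos)
          refine ⟨c + d, le_of_lt hpos, (t • u + s • u') - (t • v + s • v'),
            hmem _ (hconv hu hu' htn hsn hts) _ (hconv hv hv' htn hsn hts), ?_⟩
          have hct : c = (c + d) * t := by rw [ht]; field_simp
          have hds : d = (c + d) * s := by rw [hs]; field_simp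
          have key : (c + d) • (t • u + s • u' - (t • v + s • v'))
              = c • u + d • u' - (c • v + d • v') := by
            rw [smul_sub, smul_add, smul_add, smul_smul, smul_smul, smul_smul, smul_smul,
              ← hct, ← hds]
          rw [key, smul_sub, smul_sub]
          abel
      smul_mem' := by
        rintro c x ⟨d, hd, a, ⟨u, hu, v, hv, rfl⟩, rfl⟩
        show c • (d • (u - v)) ∈ coneHull (Ω - Ω)
        rcases le_or_gt 0 c with hc | hc
        · exact ⟨c * d, mul_nonneg hc hd, u - v, hmem u hu v hv, by rw [smul_smul]⟩
        · refine ⟨-(c * d), by nlinarith, v - u, hmem v hv u hu, ?_⟩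
          rw [smul_smul, neg_smul, smul_sub, smul_sub]
          abel }
  apply subset_antisymm
  · have : Ω - {w} ⊆ (S : Set X) := by
      rintro x ⟨u, hu, w', hw', rfl⟩
      rcases hw' with rfl
      exact ⟨1, zero_le_one, u - w', hmem u hu w' hw, (one_smul ℝ _).symm⟩
    exact Submodule.span_le.mpr this
  · rintro y ⟨c, hc, a, ⟨u, hu, v, hv, rfl⟩, rfl⟩
    have husp : u - w ∈ Submodule.span ℝ (Ω - {w}) :=
      Submodule.subset_span ⟨u, hu, w, rfl, rfl⟩
    have hvsp : v - w ∈ Submodule.span ℝ (Ω - {w}) :=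
      Submodule.subset_span ⟨v, hv, w, rfl, rfl⟩
    show c • (u - v) ∈ (Submodule.span ℝ (Ω - {w}) : Set X)
    have : u - v = (u - w) - (v - w) := by abel
    rw [this]
    exact Submodule.smul_mem _ c (Submodule.sub_mem _ husp hvsp)
end

section
/- Let X be a real locally convex topological vector space and let Ω ⊂ X be a nonempty convex set. Then sqri(Ω) = iri(Ω) if the affine hull aff(Ω) is closed, and sqri(Ω) = ∅ otherwise. -/
open Pointwise Set

lemma coneHull_eq_span {Z : Type*} [AddCommGroup Z] [Module ℝ Z] (A : Set Z)
    (h : IsLinearSubspace (coneHull A)) :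
    coneHull A = (Submodule.span ℝ A : Set Z) := by
  obtain ⟨L, hL⟩ := h
  rw [← hL]
  have hsub : A ⊆ (L : Set Z) := by
    intro a ha
    rw [hL]
    exact ⟨1, zero_le_one, a, ha, (one_smul ℝ a).symm⟩
  apply le_antisymm
  · rw [hL]
    rintro y ⟨c, _, a, ha, rfl⟩
    exact Submodule.smul_mem _ _ (Submodule.subset_span ha)
  · exact Submodule.span_le.mpr hsub

lemma span_sub_singleton {Z : Type*} [AddCommGroup Z] [Module ℝ Z] {A : Set Z} {x : Z}
    (hx : x ∈ A) :
    Submodule.span ℝ (A - {x}) = vectorSpan ℝ A := by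
  rw [vectorSpan_eq_span_vsub_set_right ℝ hx, Set.sub_singleton]
  rfl

lemma affineSpan_closed_iff {X : Type*} [AddCommGroup X] [Module ℝ X] [TopologicalSpace X]
    [IsTopologicalAddGroup X] {Ω : Set X} {x : X} (hx : x ∈ Ω) :
    IsClosed (affineSpan ℝ Ω : Set X) ↔ IsClosed ((Submodule.span ℝ (Ω - {x}) : Set X)) := by
  rw [span_sub_singleton hx]
  have hmem : x ∈ affineSpan ℝ Ω := mem_affineSpan ℝ hx
  have : (affineSpan ℝ Ω : Set X) = (Homeomorph.addLeft x) '' (vectorSpan ℝ Ω : Set X) := by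
    ext y
    simp only [Set.mem_image, Homeomorph.coe_addLeft, SetLike.mem_coe]
    constructor
    · intro hy
      refine ⟨y - x, ?_, by abel⟩
      have := (AffineSubspace.vsub_right_mem_direction_iff_mem hmem y).mpr hy
      rwa [direction_affineSpan] at this
    · rintro ⟨v, hv, rfl⟩
      have : (x + v) -ᵥ x ∈ (affineSpan ℝ Ω).direction := by
        rw [direction_affineSpan]; simpa using hv
      exact (AffineSubspace.vsub_right_mem_direction_iff_mem hmem _).mp this
  rw [this]
  exact (Homeomorph.isClosed_image _).trans Iff.rfl

theorem stmt5 {X : Type*} [AddCommGroup X] [Module ℝ X] [TopologicalSpace X]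
    [IsTopologicalAddGroup X] [ContinuousSMul ℝ X] [LocallyConvexSpace ℝ X]
    (Ω : Set X) (hne : Ω.Nonempty) (hconv : Convex ℝ Ω) :
    (IsClosed (affineSpan ℝ Ω : Set X) → sqri Ω = iri Ω) ∧
    (¬ IsClosed (affineSpan ℝ Ω : Set X) → sqri Ω = (∅ : Set X)) := by
  constructor
  · intro hcl
    ext x
    constructor
    · rintro ⟨hxΩ, hlin, _⟩; exact ⟨hxΩ, hlin⟩
    · rintro ⟨hxΩ, hlin⟩
      refine ⟨hxΩ, hlin, ?_⟩
      have hmx : x - x ∈ Ω - {x} := ⟨x, hxΩ, x, rfl, rfl⟩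
      rw [coneHull_eq_span _ hlin]
      exact (affineSpan_closed_iff hxΩ).mp hcl
  · intro hncl
    ext x
    simp only [Set.mem_empty_iff_false, iff_false]
    rintro ⟨hxΩ, hlin, hclosed⟩
    rw [coneHull_eq_span _ hlin] at hclosed
    exact hncl ((affineSpan_closed_iff hxΩ).mpr hclosed)
end

section
/- Let X and Y be real vector spaces, let T : X → Y be a linear mapping, and let Ω ⊂ X. Then T(iri(Ω)) ⊂ iri(T(Ω)). Moreover, if Ω is convex and iri(Ω) ≠ ∅, then T(iri(Ω)) = iri(T(Ω)). -/
open Pointwise Set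

section Aux

variable {Z : Type*} [AddCommGroup Z] [Module ℝ Z]

lemma mem_sub_singleton {A : Set Z} {x z : Z} : z ∈ A - {x} ↔ ∃ a ∈ A, z = a - x := by
  rw [Set.sub_singleton]
  simp [eq_comm]

lemma mem_coneHull_iff {A : Set Z} {x : Z} {z : Z} :
    z ∈ coneHull (A - {x}) ↔ ∃ c : ℝ, 0 ≤ c ∧ ∃ a ∈ A, z = c • (a - x) := by
  constructor
  · rintro ⟨c, hc, a, ha, rfl⟩
    obtain ⟨b, hb, rfl⟩ := mem_sub_singleton.1 ha
    exact ⟨c, hc, b, hb, rfl⟩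
  · rintro ⟨c, hc, a, ha, rfl⟩
    exact ⟨c, hc, a - x, mem_sub_singleton.2 ⟨a, ha, rfl⟩, rfl⟩

lemma smul_mem_coneHull {A : Set Z} {c : ℝ} (hc : 0 ≤ c) {z : Z} (hz : z ∈ coneHull A) :
    c • z ∈ coneHull A := by
  obtain ⟨d, hd, a, ha, rfl⟩ := hz
  exact ⟨c * d, mul_nonneg hc hd, a, ha, (mul_smul c d a).symm⟩

lemma coneHull_image {X Y : Type*} [AddCommGroup X] [Module ℝ X] [AddCommGroup Y] [Module ℝ Y]
    (T : X →ₗ[ℝ] Y) (A : Set X) : coneHull (T '' A) = T '' coneHull A := by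
  ext y
  constructor
  · rintro ⟨c, hc, _, ⟨a, ha, rfl⟩, rfl⟩
    exact ⟨c • a, ⟨c, hc, a, ha, rfl⟩, (T.map_smul c a).symm ▸ rfl⟩
  · rintro ⟨_, ⟨c, hc, a, ha, rfl⟩, rfl⟩
    exact ⟨c, hc, T a, ⟨a, ha, rfl⟩, T.map_smul c a⟩

lemma image_sub_singleton {X Y : Type*} [AddCommGroup X] [Module ℝ X] [AddCommGroup Y]
    [Module ℝ Y] (T : X →ₗ[ℝ] Y) (A : Set X) (x : X) :
    T '' A - {T x} = T '' (A - {x}) := by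
  ext z
  rw [mem_sub_singleton]
  constructor
  · rintro ⟨_, ⟨a, ha, rfl⟩, rfl⟩
    exact ⟨a - x, mem_sub_singleton.2 ⟨a, ha, rfl⟩, T.map_sub a x⟩
  · rintro ⟨w, hw, rfl⟩
    obtain ⟨a, ha, rfl⟩ := mem_sub_singleton.1 hw
    exact ⟨T a, ⟨a, ha, rfl⟩, (T.map_sub a x)⟩

/-- For convex `Ω`, the cone over `Ω - {x}` is closed under addition. -/
lemma add_mem_coneHull {Ω : Set Z} (hΩ : Convex ℝ Ω) (x : Z) {u v : Z}
    (hu : u ∈ coneHull (Ω - {x})) (hv : v ∈ coneHull (Ω - {x})) :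
    u + v ∈ coneHull (Ω - {x}) := by
  obtain ⟨a, ha, p, hp, rfl⟩ := mem_coneHull_iff.1 hu
  obtain ⟨b, hb, q, hq, rfl⟩ := mem_coneHull_iff.1 hv
  rcases eq_or_lt_of_le (add_nonneg ha hb) with h0 | h0
  · have ha0 : a = 0 := by linarith [(by linarith : a ≤ 0)]
    have hb0 : b = 0 := by linarith
    refine mem_coneHull_iff.2 ⟨0, le_refl 0, p, hp, ?_⟩
    simp [ha0, hb0]
  · set s := a + b with hs
    have hs0 : 0 < s := h0
    refine mem_coneHull_iff.2 ⟨s, le_of_lt hs0, (a / s) • p + (b / s) • q,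
      hΩ hp hq (div_nonneg ha hs0.le) (div_nonneg hb hs0.le) (by field_simp; exact hs.symm), ?_⟩
    have hsne : s ≠ 0 := hs0.ne'
    match_scalars <;> field_simp <;> ring

/-- The key lemma: a strict convex combination of a point of `iri Ω` with a point of `Ω`
lies in `iri Ω`. -/
lemma combo_mem_iri {Ω : Set Z} (hΩ : Convex ℝ Ω) {xb u : Z} (hxb : xb ∈ iri Ω)
    (hu : u ∈ Ω) {t : ℝ} (ht0 : 0 < t) (ht1 : t ≤ 1) :
    t • xb + (1 - t) • u ∈ iri Ω := by
  obtain ⟨hxbΩ, L, hL⟩ := hxb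
  set w := t • xb + (1 - t) • u with hw
  have hwΩ : w ∈ Ω := hΩ hxbΩ hu ht0.le (by linarith) (by ring)
  -- every `a - xb` (a ∈ Ω) belongs to the cone at w
  have hsub : ∀ a ∈ Ω, a - xb ∈ coneHull (Ω - {w}) := by
    intro a ha
    have hp : t • a + (1 - t) • u ∈ Ω := hΩ ha hu ht0.le (by linarith) (by ring)
    refine mem_coneHull_iff.2 ⟨1 / t, by positivity, t • a + (1 - t) • u, hp, ?_⟩
    rw [hw]
    rw [show t • a + (1 - t) • u - (t • xb + (1 - t) • u) = t • (a - xb) by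
      rw [smul_sub]; abel]
    rw [smul_smul, one_div, inv_mul_cancel₀ ht0.ne', one_smul]
  have hmono : coneHull (Ω - {xb}) ⊆ coneHull (Ω - {w}) := by
    intro z hz
    obtain ⟨c, hc, a, ha, rfl⟩ := mem_coneHull_iff.1 hz
    exact smul_mem_coneHull hc (hsub a ha)
  -- negation closure at w
  have hneg : ∀ z ∈ coneHull (Ω - {w}), -z ∈ coneHull (Ω - {w}) := by
    intro z hz
    obtain ⟨c, hc, a, ha, rfl⟩ := mem_coneHull_iff.1 hz
    -- w - a ∈ L = coneHull (Ω - {xb})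
    have h1 : w - xb ∈ (L : Set Z) := by
      rw [hL]
      refine mem_coneHull_iff.2 ⟨1 - t, by linarith, u, hu, ?_⟩
      rw [hw]
      module
    have h2 : xb - a ∈ (L : Set Z) := by
      have : a - xb ∈ (L : Set Z) := by
        rw [hL]; exact mem_coneHull_iff.2 ⟨1, zero_le_one, a, ha, (one_smul ℝ _).symm⟩
      have := L.neg_mem this
      rwa [neg_sub] at this
    have h3 : w - a ∈ (L : Set Z) := by
      have := L.add_mem h1 h2
      rwa [show w - xb + (xb - a) = w - a by abel] at this
    have h4 : w - a ∈ coneHull (Ω - {w}) := hmono (hL ▸ h3)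
    rw [← smul_neg, neg_sub]
    exact smul_mem_coneHull hc h4
  refine ⟨hwΩ, ?_⟩
  -- build the submodule
  refine ⟨{ carrier := coneHull (Ω - {w})
            zero_mem' := mem_coneHull_iff.2 ⟨0, le_refl 0, u, hu, (zero_smul ℝ _).symm⟩
            add_mem' := fun hu' hv' => add_mem_coneHull hΩ w hu' hv'
            smul_mem' := ?_ }, rfl⟩
  intro c z hz
  rcases le_or_gt 0 c with hc | hc
  · exact smul_mem_coneHull hc hz
  · have := smul_mem_coneHull (neg_nonneg.2 hc.le) (hneg z hz)
    rwa [smul_neg, neg_smul, neg_neg] at this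

end Aux

theorem stmt9 {X Y : Type*} [AddCommGroup X] [Module ℝ X] [AddCommGroup Y] [Module ℝ Y]
    (T : X →ₗ[ℝ] Y) (Ω : Set X) :
    T '' iri Ω ⊆ iri (T '' Ω) ∧
    (Convex ℝ Ω → (iri Ω).Nonempty → T '' iri Ω = iri (T '' Ω)) := by
  have hfwd : T '' iri Ω ⊆ iri (T '' Ω) := by
    rintro _ ⟨x, ⟨hxΩ, L, hL⟩, rfl⟩
    refine ⟨⟨x, hxΩ, rfl⟩, L.map T, ?_⟩
    rw [image_sub_singleton, coneHull_image, ← hL, Submodule.map_coe]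
  refine ⟨hfwd, fun hconv ⟨xb, hxb⟩ => ?_⟩
  refine Set.Subset.antisymm hfwd ?_
  rintro y ⟨hyTΩ, M, hM⟩
  -- `T xb - y ∈ M`, so `y - T xb ∈ M = coneHull (T '' Ω - {y})`
  have hTxb : T xb - y ∈ (M : Set Y) := by
    rw [hM]
    exact ⟨1, zero_le_one, T xb - y,
      mem_sub_singleton.2 ⟨T xb, ⟨xb, hxb.1, rfl⟩, rfl⟩, (one_smul ℝ _).symm⟩
  have hneg : y - T xb ∈ coneHull (T '' Ω - {y}) := by
    have h := M.neg_mem hTxb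
    rw [neg_sub] at h
    rw [← hM]
    exact h
  obtain ⟨c, hc, z, hz, hzy⟩ := hneg
  obtain ⟨a, haTΩ, rfl⟩ := mem_sub_singleton.1 hz
  obtain ⟨v, hv, rfl⟩ := haTΩ
  -- `y - T xb = c • (T v - y)`, hence `(1 + c) • y = T xb + c • T v`
  have hc1 : (0:ℝ) < 1 + c := by linarith
  set t : ℝ := 1 / (1 + c) with htdef
  have ht0 : 0 < t := by positivity
  have ht1 : t ≤ 1 := by
    rw [htdef, div_le_one hc1]; linarith
  have hpt : t • xb + (1 - t) • v ∈ iri Ω := combo_mem_iri hconv hxb hv ht0 ht1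
  refine ⟨t • xb + (1 - t) • v, hpt, ?_⟩
  rw [map_add, map_smul, map_smul]
  have key : (1 + c) • y = T xb + c • T v := by
    have h' : y - T xb = c • T v - c • y := by rw [hzy, smul_sub]
    have h'' : y + c • y = T xb + c • T v := by
      have := congrArg (fun z => z + (T xb + c • y)) h'
      rw [show y - T xb + (T xb + c • y) = y + c • y by abel,
        show c • T v - c • y + (T xb + c • y) = T xb + c • T v by abel] at this
      exact this
    rwa [add_smul, one_smul]
  have h2 : (1 : ℝ) - t = t * c := by rw [htdef]; field_simp; ring
  rw [h2, mul_smul, ← smul_add, ← key, smul_smul, htdef, one_div,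
    inv_mul_cancel₀ hc1.ne', one_smul]
end

section
/- Let X and Y be real vector spaces and let F : X ⇒ Y be a set-valued mapping. Then iri(gph(F)) ⊂ {(x,y) ∈ X × Y : x ∈ iri(dom(F)) and y ∈ iri(F(x))}. If in addition the graph gph(F) is a convex subset of X × Y, then equality holds: iri(gph(F)) = {(x,y) ∈ X × Y : x ∈ iri(dom(F)), y ∈ iri(F(x))}. -/
open Pointwise Set

/-- Domain of a set-valued mapping. -/
def svmDom {X Y : Type*} (F : X → Set Y) : Set X := {x | (F x).Nonempty}

/-- Graph of a set-valued mapping. -/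
def svmGph {X Y : Type*} (F : X → Set Y) : Set (X × Y) := {p | p.2 ∈ F p.1}

lemma mem_coneHull_sub {Z : Type*} [AddCommGroup Z] [Module ℝ Z] {A : Set Z} {x v : Z} :
    v ∈ coneHull (A - {x}) ↔ ∃ c : ℝ, 0 ≤ c ∧ ∃ a ∈ A, v = c • (a - x) := by
  simp only [coneHull, Set.mem_setOf_eq, Set.sub_singleton, Set.mem_image]
  constructor
  · rintro ⟨c, hc, w, ⟨a, ha, rfl⟩, rfl⟩; exact ⟨c, hc, a, ha, rfl⟩
  · rintro ⟨c, hc, a, ha, rfl⟩; exact ⟨c, hc, a - x, ⟨a, ha, rfl⟩, rfl⟩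

lemma coneHull_add {Z : Type*} [AddCommGroup Z] [Module ℝ Z] {C : Set Z} (hC : Convex ℝ C)
    {u v : Z} (hu : u ∈ coneHull C) (hv : v ∈ coneHull C) : u + v ∈ coneHull C := by
  obtain ⟨c, hc, a, ha, rfl⟩ := hu
  obtain ⟨d, hd, b, hb, rfl⟩ := hv
  rcases eq_or_lt_of_le (add_nonneg hc hd) with h | h
  · have hc0 : c = 0 := by linarith [hc, hd]
    have hd0 : d = 0 := by linarith
    exact ⟨0, le_refl 0, a, ha, by simp [hc0, hd0]⟩
  · refine ⟨c + d, le_of_lt h, (c / (c + d)) • a + (d / (c + d)) • b,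
      hC ha hb (div_nonneg hc h.le) (div_nonneg hd h.le) (by field_simp), ?_⟩
    rw [smul_add, smul_smul, smul_smul]
    rw [mul_div_cancel₀ _ h.ne', mul_div_cancel₀ _ h.ne']

lemma coneHull_smul {Z : Type*} [AddCommGroup Z] [Module ℝ Z] {C : Set Z}
    {u : Z} {r : ℝ} (hr : 0 ≤ r) (hu : u ∈ coneHull C) : r • u ∈ coneHull C := by
  obtain ⟨c, hc, a, ha, rfl⟩ := hu
  exact ⟨r * c, mul_nonneg hr hc, a, ha, (mul_smul r c a).symm⟩

theorem stmt11 {X Y : Type*} [AddCommGroup X] [Module ℝ X] [AddCommGroup Y] [Module ℝ Y]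
    (F : X → Set Y) :
    iri (svmGph F) ⊆ {p : X × Y | p.1 ∈ iri (svmDom F) ∧ p.2 ∈ iri (F p.1)} ∧
    (Convex ℝ (svmGph F) →
      iri (svmGph F) = {p : X × Y | p.1 ∈ iri (svmDom F) ∧ p.2 ∈ iri (F p.1)}) := by
  have hsub : iri (svmGph F) ⊆
      {p : X × Y | p.1 ∈ iri (svmDom F) ∧ p.2 ∈ iri (F p.1)} := by
    rintro ⟨x, y⟩ ⟨hxy, L, hL⟩
    have hxy' : y ∈ F x := hxy
    constructor
    · -- x ∈ iri (svmDom F)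
      refine ⟨⟨y, hxy'⟩, L.map (LinearMap.fst ℝ X Y), ?_⟩
      ext v
      simp only [Submodule.map_coe, Set.mem_image, SetLike.mem_coe, LinearMap.fst_apply]
      constructor
      · rintro ⟨p, hp, rfl⟩
        have : p ∈ coneHull (svmGph F - {(x, y)}) := by rw [← hL]; exact hp
        obtain ⟨c, hc, ⟨a, b⟩, hab, rfl⟩ := mem_coneHull_sub.mp this
        exact mem_coneHull_sub.mpr ⟨c, hc, a, ⟨b, hab⟩, rfl⟩
      · intro hv
        obtain ⟨c, hc, a, ⟨b, hb⟩, rfl⟩ := mem_coneHull_sub.mp hv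
        refine ⟨c • ((a, b) - (x, y)), ?_, rfl⟩
        have : c • ((a, b) - (x, y)) ∈ coneHull (svmGph F - {(x, y)}) :=
          mem_coneHull_sub.mpr ⟨c, hc, (a, b), hb, rfl⟩
        rw [← hL] at this; exact this
    · -- y ∈ iri (F x)
      refine ⟨hxy', L.comap (LinearMap.inr ℝ X Y), ?_⟩
      ext v
      simp only [Submodule.comap_coe, Set.mem_preimage, SetLike.mem_coe, LinearMap.inr_apply]
      constructor
      · intro hv
        have : ((0 : X), v) ∈ coneHull (svmGph F - {(x, y)}) := by rw [← hL]; exact hv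
        obtain ⟨c, hc, ⟨a, b⟩, hab, heq⟩ := mem_coneHull_sub.mp this
        have h1 : (0 : X) = c • (a - x) := congrArg Prod.fst heq
        have h2 : v = c • (b - y) := congrArg Prod.snd heq
        rcases eq_or_lt_of_le hc with hc0 | hcpos
        · refine mem_coneHull_sub.mpr ⟨0, le_refl 0, y, hxy', ?_⟩
          rw [h2, ← hc0]; simp
        · have hax : a = x := by
            have := h1.symm
            rw [smul_eq_zero] at this
            rcases this with h | h
            · exact absurd h.symm hcpos.ne
            · exact sub_eq_zero.mp h
          exact mem_coneHull_sub.mpr ⟨c, hc, b, hax ▸ hab, h2⟩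
      · intro hv
        obtain ⟨c, hc, b, hb, rfl⟩ := mem_coneHull_sub.mp hv
        have : ((0 : X), c • (b - y)) ∈ coneHull (svmGph F - {(x, y)}) := by
          refine mem_coneHull_sub.mpr ⟨c, hc, (x, b), hb, ?_⟩
          simp [Prod.ext_iff, smul_sub]
        rw [← hL] at this; exact this
  refine ⟨hsub, fun hconv => Set.Subset.antisymm hsub ?_⟩
  rintro ⟨x, y⟩ ⟨⟨⟨b₀, hb₀⟩, L₁, hL₁⟩, hyFx, L₂, hL₂⟩
  have hxy : ((x, y) : X × Y) ∈ svmGph F := hyFx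
  set C : Set (X × Y) := svmGph F - {(x, y)} with hC
  have hCconv : Convex ℝ C := hconv.sub (convex_singleton _)
  -- key: the negative of every generator is in the cone
  have negK : ∀ g ∈ svmGph F, -(g - (x, y)) ∈ coneHull C := by
    rintro ⟨a, b⟩ hab
    have hab' : b ∈ F a := hab
    -- x - a ∈ coneHull (svmDom F - {x})
    have hax : x - a ∈ coneHull (svmDom F - {x}) := by
      have h1 : a - x ∈ coneHull (svmDom F - {x}) :=
        mem_coneHull_sub.mpr ⟨1, zero_le_one, a, ⟨b, hab'⟩, (one_smul ℝ _).symm⟩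
      rw [← hL₁] at h1 ⊢
      simpa using L₁.neg_mem h1
    obtain ⟨t, ht, a'', ⟨b'', hb''⟩, hxa⟩ := mem_coneHull_sub.mp hax
    -- helper to convert membership in coneHull (F x - {y}) into graph-cone data
    have mkK : ∀ (s : ℝ), 0 ≤ s → ∀ γ ∈ F x, ∀ v : X × Y,
        v = s • ((x, γ) - (x, y)) → v ∈ coneHull C := by
      intro s hs γ hγ v hv
      exact mem_coneHull_sub.mpr ⟨s, hs, (x, γ), hγ, hv⟩
    -- y - β ∈ coneHull (F x - {y}) for every β ∈ F x
    have hyβ : ∀ β ∈ F x, ∃ s : ℝ, 0 ≤ s ∧ ∃ γ ∈ F x, y - β = s • (γ - y) := by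
      intro β hβ
      have h1 : β - y ∈ coneHull (F x - {y}) :=
        mem_coneHull_sub.mpr ⟨1, zero_le_one, β, hβ, (one_smul ℝ _).symm⟩
      have h2 : y - β ∈ coneHull (F x - {y}) := by
        rw [← hL₂] at h1 ⊢
        simpa using L₂.neg_mem h1
      exact mem_coneHull_sub.mp h2
    rcases eq_or_lt_of_le ht with ht0 | htpos
    · -- t = 0 : a = x
      have hax0 : a = x := by
        have hx0 : x - a = 0 := by rw [hxa, ← ht0, zero_smul]
        exact (sub_eq_zero.mp hx0).symm
      subst hax0
      obtain ⟨s, hs, γ, hγ, hyb⟩ := hyβ b hab'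
      refine mkK s hs γ hγ _ ?_
      rw [Prod.ext_iff]
      constructor
      · simp
      · simpa [smul_sub] using hyb
    · -- t > 0
      have h1t : (0:ℝ) < 1 + t := by linarith
      set l : ℝ := t / (1 + t) with hl
      set m : ℝ := 1 / (1 + t) with hm
      have hlm : l + m = 1 := by rw [hl, hm]; field_simp; ring
      have hmem : l • ((a'', b'') : X × Y) + m • ((a, b) : X × Y) ∈ svmGph F :=
        hconv hb'' hab (div_nonneg ht h1t.le) (by positivity) hlm
      have hfst : l • a'' + m • a = x := by
        have ha_eq : a = x - t • (a'' - x) := by rw [← hxa]; abel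
        rw [ha_eq, hl, hm]
        match_scalars <;> field_simp <;> ring
      set β : Y := l • b'' + m • b with hβ
      have hβFx : β ∈ F x := by
        have : (l • ((a'', b'') : X × Y) + m • ((a, b) : X × Y)) =
            (l • a'' + m • a, β) := rfl
        rw [this, hfst] at hmem
        exact hmem
      obtain ⟨s, hs, γ, hγ, hyb⟩ := hyβ β hβFx
      have hK1 : t • (((a'', b'') : X × Y) - (x, y)) ∈ coneHull C :=
        mem_coneHull_sub.mpr ⟨t, ht, (a'', b''), hb'', rfl⟩
      have hK2 : ((1 + t) * s) • (((x, γ) : X × Y) - (x, y)) ∈ coneHull C :=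
        mkK ((1 + t) * s) (by positivity) γ hγ _ rfl
      have hsum := coneHull_add hCconv hK1 hK2
      have heq : -(((a, b) : X × Y) - (x, y)) =
          t • (((a'', b'') : X × Y) - (x, y)) + ((1 + t) * s) • (((x, γ) : X × Y) - (x, y)) := by
        simp only [Prod.ext_iff, Prod.fst_neg, Prod.snd_neg, Prod.fst_sub, Prod.snd_sub,
          Prod.smul_fst, Prod.smul_snd, Prod.fst_add, Prod.snd_add, Prod.mk.injEq, neg_sub]
        constructor
        · simp [hxa]
        · have hβexp : (1 + t) • β = t • b'' + b := by
            rw [hβ, hl, hm]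
            match_scalars <;> field_simp
          rw [mul_smul, ← hyb, smul_sub t, smul_sub (1 + t : ℝ), hβexp, add_smul, one_smul]
          abel
      rw [heq]
      exact hsum
  -- assemble: coneHull C is a linear subspace
  have hKadd : ∀ u ∈ coneHull C, ∀ v ∈ coneHull C, u + v ∈ coneHull C :=
    fun u hu v hv => coneHull_add hCconv hu hv
  have hKneg : ∀ u ∈ coneHull C, -u ∈ coneHull C := by
    rintro u ⟨c, hc, w, hw, rfl⟩
    obtain ⟨g, hg, rfl⟩ : ∃ g ∈ svmGph F, g - (x, y) = w := by
      rw [hC, Set.sub_singleton] at hw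
      obtain ⟨g, hg, rfl⟩ := hw
      exact ⟨g, hg, rfl⟩
    have := coneHull_smul hc (negK g hg)
    rw [smul_neg] at this
    exact this
  refine ⟨hxy, ⟨{
    carrier := coneHull C
    add_mem' := fun hu hv => hKadd _ hu _ hv
    zero_mem' := ⟨0, le_refl 0, (x, y) - (x, y), by
      rw [hC, Set.sub_singleton]; exact ⟨(x, y), hxy, rfl⟩, (zero_smul ℝ _).symm⟩
    smul_mem' := by
      intro r u hu
      rcases le_or_gt 0 r with hr | hr
      · exact coneHull_smul hr hu
      · have : r • u = (-r) • (-u) := by rw [smul_neg, neg_smul, neg_neg]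
        rw [this]
        exact coneHull_smul (by linarith) (hKneg u hu) }, rfl⟩⟩
end

section
/- Let X and Y be real locally convex topological vector spaces and let F : X ⇒ Y be a set-valued mapping such that the interior int(F(x)) is nonempty for every x ∈ dom(F). Then aff(gph(F)) = aff(dom(F)) × Y. -/
open Pointwise Set

/-- Affine map `x ↦ (x, y)`. -/
def inlAff {X Y : Type*} [AddCommGroup X] [Module ℝ X] [AddCommGroup Y] [Module ℝ Y]
    (y : Y) : X →ᵃ[ℝ] X × Y where
  toFun x := (x, y)
  linear := LinearMap.inl ℝ X Y
  map_vadd' p v := by simp [Prod.ext_iff]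

/-- Affine map `y ↦ (x, y)`. -/
def inrAff {X Y : Type*} [AddCommGroup X] [Module ℝ X] [AddCommGroup Y] [Module ℝ Y]
    (x : X) : Y →ᵃ[ℝ] X × Y where
  toFun y := (x, y)
  linear := LinearMap.inr ℝ X Y
  map_vadd' p v := by simp [Prod.ext_iff]

/-- The affine span of a set with nonempty interior in a real topological vector space is `⊤`. -/
lemma affineSpan_eq_top_of_interior_nonempty {Y : Type*}
    [AddCommGroup Y] [Module ℝ Y] [TopologicalSpace Y]
    [IsTopologicalAddGroup Y] [ContinuousSMul ℝ Y]
    {s : Set Y} (hs : (interior s).Nonempty) : affineSpan ℝ s = ⊤ := by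
  obtain ⟨y₀, hy₀⟩ := hs
  have hne : s.Nonempty := ⟨y₀, interior_subset hy₀⟩
  rw [AffineSubspace.affineSpan_eq_top_iff_vectorSpan_eq_top_of_nonempty ℝ Y Y hne]
  apply Submodule.eq_top_of_nonempty_interior'
  have hsub : (fun y => y - y₀) '' interior s ⊆ (vectorSpan ℝ s : Set Y) := by
    rintro _ ⟨y, hy, rfl⟩
    exact vsub_mem_vectorSpan ℝ (interior_subset hy) (interior_subset hy₀)
  have hopen : IsOpen ((fun y => y - y₀) '' interior s) :=
    (Homeomorph.subRight y₀).isOpenMap _ isOpen_interior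
  exact ⟨y₀ - y₀, interior_maximal hsub hopen ⟨y₀, hy₀, rfl⟩⟩

theorem stmt12 {X Y : Type*}
    [AddCommGroup X] [Module ℝ X] [TopologicalSpace X]
    [IsTopologicalAddGroup X] [ContinuousSMul ℝ X] [LocallyConvexSpace ℝ X]
    [AddCommGroup Y] [Module ℝ Y] [TopologicalSpace Y]
    [IsTopologicalAddGroup Y] [ContinuousSMul ℝ Y] [LocallyConvexSpace ℝ Y]
    (F : X → Set Y) (h : ∀ x ∈ svmDom F, (interior (F x)).Nonempty) :
    (affineSpan ℝ (svmGph F) : Set (X × Y)) =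
      (affineSpan ℝ (svmDom F) : Set X) ×ˢ (univ : Set Y) := by
  -- Step 1: for each x in the domain, every (x, y) is in the affine span of the graph.
  have key : ∀ x ∈ svmDom F, ∀ y : Y, (x, y) ∈ affineSpan ℝ (svmGph F) := by
    intro x hx y
    have hspan : affineSpan ℝ (F x) = ⊤ := affineSpan_eq_top_of_interior_nonempty (h x hx)
    have hle : affineSpan ℝ (F x) ≤
        (affineSpan ℝ (svmGph F)).comap (inrAff (X := X) x) := by
      apply affineSpan_le.mpr
      intro y' hy'
      exact subset_affineSpan ℝ _ (by exact hy' : ((x, y') : X × Y) ∈ svmGph F)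
    have := hle (hspan ▸ AffineSubspace.mem_top ℝ Y y)
    exact this
  apply Set.Subset.antisymm
  · -- affineSpan of graph is contained in the product
    have hle : affineSpan ℝ (svmGph F) ≤
        (affineSpan ℝ (svmDom F)).comap (AffineMap.fst (k := ℝ) (P1 := X) (P2 := Y)) := by
      apply affineSpan_le.mpr
      rintro ⟨x, y⟩ hxy
      exact subset_affineSpan ℝ _ ⟨y, hxy⟩
    rintro ⟨x, y⟩ hp
    exact ⟨hle hp, trivial⟩
  · rintro ⟨x, y⟩ ⟨hx, -⟩
    have hle : affineSpan ℝ (svmDom F) ≤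
        (affineSpan ℝ (svmGph F)).comap (inlAff (Y := Y) y) := by
      apply affineSpan_le.mpr
      intro x' hx'
      exact key x' hx' y
    exact hle hx
end

section
/- Let X be a real locally convex topological vector space and let Ω ⊂ X be a quasi-nearly convex set. If qi(Ω) ≠ ∅, then qi(Ω) = qri(Ω). -/
open Pointwise Set

/-- Quasi-interior. -/
def qi {Z : Type*} [AddCommGroup Z] [Module ℝ Z] [TopologicalSpace Z] (A : Set Z) : Set Z :=
  {x ∈ A | closure (coneHull (A - {x})) = univ}

/-- A set is quasi-nearly convex if it is squeezed between a convex set with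
nonempty quasi-relative interior and its closure. -/
def QuasiNearlyConvex {Z : Type*} [AddCommGroup Z] [Module ℝ Z] [TopologicalSpace Z]
    (A : Set Z) : Prop :=
  ∃ C : Set Z, Convex ℝ C ∧ (qri C).Nonempty ∧ C ⊆ A ∧ A ⊆ closure C

theorem stmt17 {X : Type*} [AddCommGroup X] [Module ℝ X] [TopologicalSpace X]
    [IsTopologicalAddGroup X] [ContinuousSMul ℝ X] [LocallyConvexSpace ℝ X]
    (Ω : Set X) (h : QuasiNearlyConvex Ω) (hqi : (qi Ω).Nonempty) :
    qi Ω = qri Ω := by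
  obtain ⟨x0, hx0Ω, hx0⟩ := hqi
  ext x
  constructor
  · rintro ⟨hxΩ, hcl⟩
    exact ⟨hxΩ, ⊤, Submodule.top_coe.trans hcl.symm⟩
  · rintro ⟨hxΩ, L, hL⟩
    refine ⟨hxΩ, ?_⟩
    by_contra hne
    -- L is a proper closed subspace, so pick v ∉ L
    have hvex : ∃ v, v ∉ (L : Set X) := by
      by_contra hall
      push_neg at hall
      exact hne (hL ▸ eq_univ_of_forall hall)
    obtain ⟨v, hv⟩ := hvex
    have hclosed : IsClosed (L : Set X) := hL ▸ isClosed_closure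
    obtain ⟨f, u, hfu⟩ := geometric_hahn_banach_closed_point L.convex hclosed hv
    -- f vanishes on L
    have hf0 : ∀ a ∈ L, f a = 0 := by
      intro a ha
      by_contra h0
      have := hfu.1 ((u / f a) • a) (L.smul_mem _ ha)
      rw [map_smul, smul_eq_mul, div_mul_cancel₀ _ h0] at this
      exact lt_irrefl _ this
    have hu0 : 0 < u := by simpa using hfu.1 0 L.zero_mem
    -- every ω ∈ Ω satisfies ω - x ∈ L
    have hmem : ∀ ω ∈ Ω, (ω - x) ∈ (L : Set X) := by
      intro ω hω
      rw [hL]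
      exact subset_closure ⟨1, zero_le_one, ω - x,
        sub_mem_sub hω (mem_singleton x), (one_smul _ _).symm⟩
    -- hence f is constant on Ω
    have hc : ∀ ω ∈ Ω, f ω = f x := by
      intro ω hω
      have := hf0 _ (hmem ω hω)
      rw [map_sub] at this
      linarith
    -- coneHull (Ω - {x0}) ⊆ ker f
    have hsub : coneHull (Ω - {x0}) ⊆ f ⁻¹' {0} := by
      rintro y ⟨c, hc0, a, ha, rfl⟩
      obtain ⟨ω, hω, b, hb, rfl⟩ := ha
      rw [mem_singleton_iff] at hb
      rw [hb]
      have h1 : f ω = f x := hc ω hω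
      have h2 : f x0 = f x := hc x0 hx0Ω
      simp only [mem_preimage, map_smul, map_sub, mem_singleton_iff, smul_eq_mul]
      rw [h1, h2]
      ring
    have hkercl : IsClosed (f ⁻¹' {0}) := isClosed_singleton.preimage f.continuous
    have : closure (coneHull (Ω - {x0})) ⊆ f ⁻¹' {0} := closure_minimal hsub hkercl
    rw [hx0] at this
    have hfv : f v = 0 := this (mem_univ v)
    have : u < f v := hfu.2
    linarith
end

section
/- Let X and Y be real locally convex topological vector spaces, let T : X → Y be a continuous linear mapping, and let Ω ⊂ X be a quasi-nearly convex set. Then: (a) T(qri(Ω)) ⊂ qri(T(Ω)); (b) if qri(Ω) ≠ ∅, T is injective, and T(Ω) is quasi-regular (i.e., qri(T(Ω)) = iri(T(Ω))), then T(qri(Ω)) = qri(T(Ω)); (c) both T(Ω) and T(qri(Ω)) are quasi-nearly convex subsets of Y. -/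
open Pointwise Set

section Aux

variable {Z W : Type*} [AddCommGroup Z] [Module ℝ Z] [AddCommGroup W] [Module ℝ W]

lemma coneHull_mono {A B : Set Z} (h : A ⊆ B) : coneHull A ⊆ coneHull B := by
  rintro y ⟨c, hc, a, ha, rfl⟩; exact ⟨c, hc, a, h ha, rfl⟩

lemma subset_coneHull (A : Set Z) : A ⊆ coneHull A :=
  fun a ha => ⟨1, zero_le_one, a, ha, (one_smul ℝ a).symm⟩

lemma coneHull_coneHull (A : Set Z) : coneHull (coneHull A) ⊆ coneHull A := by
  rintro y ⟨c, hc, a, ⟨d, hd, b, hb, rfl⟩, rfl⟩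
  exact ⟨c * d, mul_nonneg hc hd, b, hb, (mul_smul c d b).symm⟩

lemma coneHull_subset_submodule {A : Set Z} {L : Submodule ℝ Z} (h : A ⊆ L) :
    coneHull A ⊆ L := by
  rintro y ⟨c, _, a, ha, rfl⟩; exact L.smul_mem c (h ha)

lemma coneHull_image_s18 (f : Z →ₗ[ℝ] W) (A : Set Z) : coneHull (f '' A) = f '' coneHull A := by
  ext y; constructor
  · rintro ⟨c, hc, _, ⟨a, ha, rfl⟩, rfl⟩
    exact ⟨c • a, ⟨c, hc, a, ha, rfl⟩, map_smul f c a⟩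
  · rintro ⟨_, ⟨c, hc, a, ha, rfl⟩, rfl⟩
    exact ⟨c, hc, f a, ⟨a, ha, rfl⟩, map_smul f c a⟩

omit [Module ℝ Z] in
lemma sub_singleton_eq (A : Set Z) (x : Z) : A - {x} = (fun a => a - x) '' A := by
  simp [Set.sub_singleton]

lemma image_sub_singleton_s18 (f : Z →ₗ[ℝ] W) (A : Set Z) (x : Z) :
    f '' A - {f x} = f '' (A - {x}) := by
  rw [sub_singleton_eq, sub_singleton_eq, ← Set.image_comp, ← Set.image_comp]
  ext a; simp [map_sub]

/-- If `f` is injective and `f '' S` is a linear subspace, so is `S`. -/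
lemma isLinearSubspace_of_image (f : Z →ₗ[ℝ] W) (hf : Function.Injective f) {S : Set Z}
    (h : IsLinearSubspace (f '' S)) : IsLinearSubspace S := by
  obtain ⟨M, hM⟩ := h
  refine ⟨M.comap f, ?_⟩
  have : S = f ⁻¹' (f '' S) := (Set.preimage_image_eq S hf).symm
  rw [this, ← hM]; rfl

end Aux

section Top

variable {Z W : Type*}
  [AddCommGroup Z] [Module ℝ Z] [TopologicalSpace Z]
  [IsTopologicalAddGroup Z] [ContinuousSMul ℝ Z]
  [AddCommGroup W] [Module ℝ W] [TopologicalSpace W]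
  [IsTopologicalAddGroup W] [ContinuousSMul ℝ W]

lemma isLinearSubspace_closure {S : Set Z} (h : IsLinearSubspace S) :
    IsLinearSubspace (closure S) := by
  obtain ⟨L, rfl⟩ := h
  exact ⟨L.topologicalClosure, rfl⟩

lemma coneHull_closure_subset (A : Set Z) : coneHull (closure A) ⊆ closure (coneHull A) := by
  rintro y ⟨c, hc, a, ha, rfl⟩
  have h1 : c • a ∈ (fun z => c • z) '' closure A := ⟨a, ha, rfl⟩
  have h2 : (fun z => c • z) '' closure A ⊆ closure ((fun z => c • z) '' A) :=
    image_closure_subset_closure_image (continuous_const_smul c)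
  refine closure_mono ?_ (h2 h1)
  rintro _ ⟨b, hb, rfl⟩
  exact ⟨c, hc, b, hb, rfl⟩

lemma closure_sub_singleton (A : Set Z) (x : Z) :
    closure A - {x} ⊆ closure (A - {x}) := by
  rw [sub_singleton_eq, sub_singleton_eq]
  exact image_closure_subset_closure_image (continuous_id.sub continuous_const)

/-- If `S ⊆ A ⊆ closure S` then the closed conic hulls of `A - x` and `S - x` agree. -/
lemma closure_coneHull_sandwich {S A : Set Z} (h1 : S ⊆ A) (h2 : A ⊆ closure S) (x : Z) :
    closure (coneHull (A - {x})) = closure (coneHull (S - {x})) := by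
  apply Set.Subset.antisymm
  · have : A - {x} ⊆ closure (S - {x}) := by
      refine Set.Subset.trans ?_ (closure_sub_singleton S x)
      exact Set.sub_subset_sub h2 (Set.Subset.refl _)
    have h3 : coneHull (A - {x}) ⊆ closure (coneHull (S - {x})) :=
      Set.Subset.trans (coneHull_mono this) (coneHull_closure_subset _)
    calc closure (coneHull (A - {x})) ⊆ closure (closure (coneHull (S - {x}))) :=
          closure_mono h3
      _ = closure (coneHull (S - {x})) := closure_closure
  · exact closure_mono (coneHull_mono (Set.sub_subset_sub h1 (Set.Subset.refl _)))

/-- Under sandwiching, `qri S ⊆ qri A`. -/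
lemma qri_sandwich {S A : Set Z} (h1 : S ⊆ A) (h2 : A ⊆ closure S) :
    qri S ⊆ qri A := by
  rintro x ⟨hx, hsub⟩
  exact ⟨h1 hx, by rwa [closure_coneHull_sandwich h1 h2]⟩

/-- `qri A` members map into `qri (g '' A)` for continuous linear `g`. -/
lemma qri_image_lin (g : Z →ₗ[ℝ] W) (hg : Continuous g) {A : Set Z} {x : Z} (hx : x ∈ qri A) :
    g x ∈ qri (g '' A) := by
  obtain ⟨hxA, L, hL⟩ := hx
  refine ⟨Set.mem_image_of_mem g hxA, ?_⟩
  rw [image_sub_singleton_s18 g, coneHull_image_s18]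
  have key : closure (g '' coneHull (A - {x})) = closure (g '' (L : Set Z)) := by
    apply Set.Subset.antisymm
    · apply closure_mono
      apply Set.image_mono
      rw [hL]; exact subset_closure
    · have h0 : g '' (L : Set Z) ⊆ closure (g '' coneHull (A - {x})) := by
        rw [hL]
        exact image_closure_subset_closure_image hg
      have h1 : closure (g '' (L : Set Z))
          ⊆ closure (closure (g '' coneHull (A - {x}))) := closure_mono h0
      rwa [closure_closure] at h1
  rw [key]
  exact isLinearSubspace_closure ⟨L.map g, rfl⟩

lemma qri_image (f : Z →L[ℝ] W) {A : Set Z} {x : Z} (hx : x ∈ qri A) :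
    f x ∈ qri (f '' A) :=
  qri_image_lin (f : Z →ₗ[ℝ] W) f.continuous hx

/-- Segment lemma: moving from a qri point towards any point of a convex set stays in qri. -/
lemma qri_segment {C : Set Z} (hC : Convex ℝ C) {x c : Z} (hx : x ∈ qri C) (hc : c ∈ C)
    {l : ℝ} (hl : 0 < l) (hl1 : l ≤ 1) : l • x + (1 - l) • c ∈ qri C := by
  obtain ⟨hxC, L, hL⟩ := hx
  set z := l • x + (1 - l) • c with hz
  have hzC : z ∈ C := hC hxC hc hl.le (by linarith) (by ring)
  have hCxL : C - {x} ⊆ (L : Set Z) := fun u hu => by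
    rw [hL]; exact subset_closure (subset_coneHull _ hu)
  refine ⟨hzC, L, ?_⟩
  apply Set.Subset.antisymm
  · -- L ⊆ closure (coneHull (C - {z}))
    rw [hL]
    apply closure_mono
    have hsub : C - {x} ⊆ coneHull (C - {z}) := by
      intro u hu; rw [sub_singleton_eq] at hu; obtain ⟨c', hc', rfl⟩ := hu
      have hu' : l • c' + (1 - l) • c ∈ C := hC hc' hc hl.le (by linarith) (by ring)
      refine ⟨l⁻¹, inv_nonneg.2 hl.le, (l • c' + (1 - l) • c) - z, ?_, ?_⟩
      · rw [sub_singleton_eq]; exact ⟨_, hu', rfl⟩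
      · have he : (l • c' + (1 - l) • c) - z = l • (c' - x) := by
          rw [hz]; module
        rw [he, smul_smul, inv_mul_cancel₀ hl.ne', one_smul]
    exact fun u hu => coneHull_coneHull _ (coneHull_mono hsub hu)
  · -- closure (coneHull (C - {z})) ⊆ L
    have hLclosed : IsClosed (L : Set Z) := hL ▸ isClosed_closure
    rw [← hLclosed.closure_eq]
    apply closure_mono
    apply coneHull_subset_submodule
    intro u hu
    rw [sub_singleton_eq] at hu
    obtain ⟨c', hc', rfl⟩ := hu
    have h1 : c' - x ∈ L := hCxL (by rw [sub_singleton_eq]; exact ⟨c', hc', rfl⟩)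
    have h2 : c - x ∈ L := hCxL (by rw [sub_singleton_eq]; exact ⟨c, hc, rfl⟩)
    have he : c' - z = l • (c' - x) + (1 - l) • ((c' - x) - (c - x)) := by
      rw [hz]; module
    show c' - (l • x + (1 - l) • c) ∈ (L : Set Z)
    rw [← hz, he]
    exact L.add_mem (L.smul_mem _ h1) (L.smul_mem _ (L.sub_mem h1 h2))


/-- Density of the quasi-relative interior in a convex set (when nonempty). -/
lemma subset_closure_qri {C : Set Z} (hC : Convex ℝ C) (hq : (qri C).Nonempty) :
    C ⊆ closure (qri C) := by
  obtain ⟨x, hx⟩ := hq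
  intro c hc
  have hcont : Continuous (fun l : ℝ => l • x + (1 - l) • c) := by fun_prop
  have htend : Filter.Tendsto (fun l : ℝ => l • x + (1 - l) • c)
      (nhdsWithin 0 (Set.Ioi 0)) (nhds c) := by
    have h := hcont.tendsto 0
    simp only [zero_smul, sub_zero, one_smul, zero_add] at h
    exact h.mono_left nhdsWithin_le_nhds
  refine mem_closure_of_tendsto htend ?_
  filter_upwards [Ioc_mem_nhdsGT_of_mem (by norm_num : (0:ℝ) ∈ Set.Ico (0:ℝ) 1)] with l hl
  exact qri_segment hC hx hc hl.1 hl.2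

/-- The quasi-relative interior of a convex set is convex. -/
lemma convex_qri {C : Set Z} (hC : Convex ℝ C) : Convex ℝ (qri C) := by
  intro a ha b hb la lb hla hlb hsum
  rcases eq_or_lt_of_le hla with h0 | h0
  · have : lb = 1 := by linarith
    rw [← h0, this]; simpa using hb
  · have hlb' : lb = 1 - la := by linarith
    rw [hlb']
    exact qri_segment hC ha hb.1 h0 (by linarith)

end Top

theorem stmt18 {X Y : Type*}
    [AddCommGroup X] [Module ℝ X] [TopologicalSpace X]
    [IsTopologicalAddGroup X] [ContinuousSMul ℝ X] [LocallyConvexSpace ℝ X]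
    [AddCommGroup Y] [Module ℝ Y] [TopologicalSpace Y]
    [IsTopologicalAddGroup Y] [ContinuousSMul ℝ Y] [LocallyConvexSpace ℝ Y]
    (T : X →L[ℝ] Y) (Ω : Set X) (h : QuasiNearlyConvex Ω) :
    (T '' qri Ω ⊆ qri (T '' Ω)) ∧
    ((qri Ω).Nonempty → Function.Injective (T : X → Y) → qri (T '' Ω) = iri (T '' Ω) →
      T '' qri Ω = qri (T '' Ω)) ∧
    (QuasiNearlyConvex (T '' Ω) ∧ QuasiNearlyConvex (T '' qri Ω)) := by
  obtain ⟨C, hC, hqC, hCΩ, hΩC⟩ := h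
  have hqCΩ : qri C ⊆ qri Ω := qri_sandwich hCΩ hΩC
  have hqriC_sub : qri C ⊆ C := fun u hu => hu.1
  have hdense : C ⊆ closure (qri C) := subset_closure_qri hC hqC
  have parta : T '' qri Ω ⊆ qri (T '' Ω) := by
    rintro _ ⟨x, hx, rfl⟩
    exact qri_image T hx
  refine ⟨parta, ?_, ?_, ?_⟩
  · -- (b)
    intro _ hinj hqr
    refine Set.Subset.antisymm parta ?_
    intro y hy
    rw [hqr] at hy
    obtain ⟨⟨x, hxΩ, rfl⟩, hsub⟩ := hy
    have himg : coneHull ((T : X →ₗ[ℝ] Y) '' Ω - {(T : X →ₗ[ℝ] Y) x})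
        = (T : X →ₗ[ℝ] Y) '' coneHull (Ω - {x}) := by
      rw [image_sub_singleton_s18, coneHull_image_s18]
    have hsub' : IsLinearSubspace ((T : X →ₗ[ℝ] Y) '' coneHull (Ω - {x})) := by
      rw [← himg]; exact hsub
    have hS : IsLinearSubspace (coneHull (Ω - {x})) :=
      isLinearSubspace_of_image (T : X →ₗ[ℝ] Y) hinj hsub'
    exact ⟨x, ⟨hxΩ, isLinearSubspace_closure hS⟩, rfl⟩
  · -- (c) first part : T '' Ω is quasi-nearly convex
    refine ⟨T '' C, hC.linear_image (T : X →ₗ[ℝ] Y), ?_, Set.image_mono hCΩ, ?_⟩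
    · obtain ⟨x0, hx0⟩ := hqC
      exact ⟨T x0, qri_image T hx0⟩
    · calc T '' Ω ⊆ T '' closure C := Set.image_mono hΩC
        _ ⊆ closure (T '' C) := image_closure_subset_closure_image T.continuous
  · -- (c) second part : T '' qri Ω is quasi-nearly convex
    refine ⟨T '' qri C, (convex_qri hC).linear_image (T : X →ₗ[ℝ] Y), ?_,
      Set.image_mono hqCΩ, ?_⟩
    · obtain ⟨x0, hx0⟩ := hqC
      have hx0' : x0 ∈ qri (qri C) :=
        ⟨hx0, by rw [← closure_coneHull_sandwich hqriC_sub hdense x0]; exact hx0.2⟩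
      exact ⟨T x0, qri_image T hx0'⟩
    · have h1 : qri Ω ⊆ closure (qri C) := by
        intro u hu
        have : u ∈ closure (closure (qri C)) := closure_mono hdense (hΩC hu.1)
        rwa [closure_closure] at this
      calc T '' qri Ω ⊆ T '' closure (qri C) := Set.image_mono h1
        _ ⊆ closure (T '' qri C) := image_closure_subset_closure_image T.continuous
end
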